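/- Let φ ∈ C²((0,∞)) be positive and satisfy (e^{-2V}φ')' = -c·(2/α)·e^{-2V}·φ on (0,∞), where c > 0, α ∈ C((0,∞)) is positive, and V ∈ C¹((0,∞)) satisfies V(x) - V(x₁) → ∞ as x → ∞ for each fixed x₁. Then φ' > 0 on (0,∞). -/

import Mathlib

open Filter

/-- Lemma 5.5 (monotonicity of the principal eigenfunction): if `φ > 0` is `C²` on
`(0,∞)` and solves `(e^{-2V}φ')' = -c·(2/α)·e^{-2V}·φ` with `c > 0`, `α > 0`
continuous, `V ∈ C¹` with `V(x) - V(x₁) → ∞` as `x → ∞`, then `φ' > 0` on `(0,∞)`. -/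
theorem stmt5 (φ V α : ℝ → ℝ) (c : ℝ) (hc : 0 < c)
    (hφ : ContDiffOn ℝ 2 φ (Set.Ioi 0))
    (hφpos : ∀ x ∈ Set.Ioi (0 : ℝ), 0 < φ x)
    (hα : ContinuousOn α (Set.Ioi 0))
    (hαpos : ∀ x ∈ Set.Ioi (0 : ℝ), 0 < α x)
    (hV : ContDiffOn ℝ 1 V (Set.Ioi 0))
    (hVgrow : ∀ x₁ ∈ Set.Ioi (0 : ℝ),
      Tendsto (fun x => V x - V x₁) atTop atTop)
    (heq : ∀ x ∈ Set.Ioi (0 : ℝ),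
      deriv (fun y => Real.exp (-2 * V y) * deriv φ y) x
        = -c * (2 / α x) * Real.exp (-2 * V x) * φ x) :
    ∀ x ∈ Set.Ioi (0 : ℝ), 0 < deriv φ x := by
  have hopen : IsOpen (Set.Ioi (0:ℝ)) := isOpen_Ioi
  set W : ℝ → ℝ := fun y => Real.exp (-2 * V y) * deriv φ y with hWdef
  have hφ' : ContDiffOn ℝ 1 (deriv φ) (Set.Ioi 0) :=
    hφ.deriv_of_isOpen hopen (by norm_num)
  have hφ'cont : ContinuousOn (deriv φ) (Set.Ioi 0) := hφ'.continuousOn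
  have hdφ : ∀ x ∈ Set.Ioi (0:ℝ), DifferentiableAt ℝ φ x := fun x hx =>
    (hφ.differentiableOn (by norm_num)).differentiableAt (hopen.mem_nhds hx)
  have hEcont : ContinuousOn (fun y => Real.exp (-2 * V y)) (Set.Ioi 0) :=
    Real.continuous_exp.comp_continuousOn (continuousOn_const.mul hV.continuousOn)
  have hWcont : ContinuousOn W (Set.Ioi 0) := hEcont.mul hφ'cont
  have hanti : StrictAntiOn W (Set.Ioi 0) := by
    apply strictAntiOn_of_deriv_neg (convex_Ioi 0) hWcont
    intro y hy
    rw [interior_Ioi] at hy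
    rw [hWdef, heq y hy]
    have h1 : 0 < c * (2 / α y) * Real.exp (-2 * V y) * φ y := by
      have := hαpos y hy
      have := hφpos y hy
      positivity
    nlinarith
  intro x hx
  by_contra hcon
  push_neg at hcon
  have hx0 : (0:ℝ) < x := hx
  have hWx : W x ≤ 0 := mul_nonpos_of_nonneg_of_nonpos (Real.exp_pos _).le hcon
  have hx1 : x + 1 ∈ Set.Ioi (0:ℝ) := by simp only [Set.mem_Ioi]; linarith
  have hWx1 : W (x+1) < 0 := lt_of_lt_of_le (hanti hx hx1 (lt_add_one x)) hWx
  set δ := -W (x+1) with hδdef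
  have hδ : 0 < δ := by simp [hδdef]; linarith
  -- exp (2 V) → ∞
  have hVtop : Tendsto V atTop atTop := by
    have h1 := hVgrow x hx
    have h2 := tendsto_atTop_add_const_right atTop (V x) h1
    simpa using h2
  have htop : Tendsto (fun s => Real.exp (2 * V s)) atTop atTop :=
    Real.tendsto_exp_atTop.comp (hVtop.const_mul_atTop two_pos)
  obtain ⟨a, ha⟩ := eventually_atTop.mp (htop.eventually_ge_atTop (2 / δ))
  set x₃ := max a (x+1) with hx₃def
  have hx₃pos : (0:ℝ) < x₃ := lt_of_lt_of_le (by linarith) (le_max_right a (x+1))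
  have hsub : Set.Ici x₃ ⊆ Set.Ioi (0:ℝ) := fun s hs => lt_of_lt_of_le hx₃pos hs
  -- deriv φ ≤ -2 on Ici x₃
  have hkey : ∀ s ∈ Set.Ici x₃, deriv φ s ≤ -2 := by
    intro s hs
    have hsmem : s ∈ Set.Ioi (0:ℝ) := hsub hs
    have hWs : W s ≤ W (x+1) := by
      rcases eq_or_lt_of_le (le_trans (le_max_right a (x+1)) hs) with h | h
      · rw [← h]
      · exact (hanti hx1 hsmem h).le
    have hexp : 2 / δ ≤ Real.exp (2 * V s) :=
      ha s (le_trans (le_max_left a (x+1)) hs)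
    have hid : deriv φ s = Real.exp (2 * V s) * W s := by
      rw [hWdef]
      simp only
      rw [← mul_assoc, ← Real.exp_add]
      ring_nf
      simp
    rw [hid]
    have h1 : Real.exp (2 * V s) * W s ≤ Real.exp (2 * V s) * W (x+1) :=
      mul_le_mul_of_nonneg_left hWs (Real.exp_pos _).le
    have h2 : Real.exp (2 * V s) * W (x+1) ≤ (2 / δ) * W (x+1) := by
      have : W (x+1) = -δ := by simp [hδdef]
      rw [this]
      nlinarith [Real.exp_pos (2 * V s)]
    have h3 : (2 / δ) * W (x+1) = -2 := by
      have : W (x+1) = -δ := by simp [hδdef]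
      rw [this]
      field_simp
    linarith
  -- φ + id strictly decreasing on Ici x₃
  have hganti : StrictAntiOn (fun t => φ t + t) (Set.Ici x₃) := by
    apply strictAntiOn_of_deriv_neg (convex_Ici x₃)
    · exact (hφ.continuousOn.mono hsub).add continuousOn_id
    · intro t ht
      rw [interior_Ici] at ht
      have htmem : t ∈ Set.Ici x₃ := Set.mem_Ici.mpr (le_of_lt ht)
      have hd : deriv (fun t => φ t + t) t = deriv φ t + 1 :=
        (((hdφ t (hsub htmem)).hasDerivAt).add (hasDerivAt_id t)).deriv
      rw [hd]
      have := hkey t htmem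
      linarith
  have hφx₃ : 0 < φ x₃ := hφpos x₃ (hsub (le_refl x₃))
  have hlt : x₃ < x₃ + φ x₃ := by linarith
  have := hganti (Set.mem_Ici.mpr le_rfl) (Set.mem_Ici.mpr hlt.le) hlt
  have hpos := hφpos (x₃ + φ x₃) (hsub hlt.le)
  simp only at this
  linarith
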